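/- The set of functions (0,∞)² → ℝ expressible as a pointwise supremum of infima of finitely many generalized polynomial functions is closed under subtraction and multiplication, and hence forms a subring of the ring of all real-valued functions on (0,∞)². -/

import Mathlib

open Set

noncomputable section

/-- The open positive quadrant `(0,∞)²`, as a subtype of `ℝ × ℝ`. -/
abbrev PQ : Type := {p : ℝ × ℝ // 0 < p.1 ∧ 0 < p.2}

/-- A generalized polynomial function (signomial) of two variables: a finite sum
`∑ cᵢ x^{αᵢ₁} y^{αᵢ₂}` with nonzero real coefficients and distinct real exponent pairs. -/
def IsGenPoly (a : PQ → ℝ) : Prop :=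
  ∃ (m : ℕ) (c : Fin m → ℝ) (α : Fin m → ℝ × ℝ),
    (∀ i, c i ≠ 0) ∧ Function.Injective α ∧
    ∀ p : PQ, a p = ∑ i, c i * p.1.1 ^ (α i).1 * p.1.2 ^ (α i).2

/-- A basic generalized semialgebraic (semisignomial) subset of `(0,∞)²`. -/
def IsBasicGSA (S : Set PQ) : Prop :=
  ∃ (f : PQ → ℝ) (K : ℕ) (g : Fin K → PQ → ℝ),
    IsGenPoly f ∧ (∀ k, IsGenPoly (g k)) ∧
    S = {p : PQ | f p = 0 ∧ ∀ k, 0 < g k p}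

/-- A generalized semialgebraic set: a finite union of basic ones. -/
def IsGSA (S : Set PQ) : Prop :=
  ∃ (J : ℕ) (T : Fin J → Set PQ), (∀ j, IsBasicGSA (T j)) ∧ S = ⋃ j, T j

/-- `h` is piecewise generalized polynomial: there are finitely many *distinct*
generalized polynomial functions `g i` whose agreement sets with `h` are
generalized semialgebraic and cover `(0,∞)²`. -/
def IsPiecewiseGenPoly (h : PQ → ℝ) : Prop :=
  ∃ (l : ℕ) (g : Fin l → PQ → ℝ),
    (∀ i, IsGenPoly (g i)) ∧ Function.Injective g ∧
    (∀ i, IsGSA {p : PQ | h p = g i p}) ∧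
    ∀ p : PQ, ∃ i, h p = g i p

/-- `h` is a pointwise sup of infs of finitely many generalized polynomial functions. -/
def IsSupInf (h : PQ → ℝ) : Prop :=
  ∃ (J : ℕ) (K : Fin (J + 1) → ℕ)
    (f : (j : Fin (J + 1)) → Fin (K j + 1) → PQ → ℝ),
    (∀ j k, IsGenPoly (f j k)) ∧
    ∀ p : PQ, h p = ⨆ j, ⨅ k, f j k p

/-- the basic monomial functions as a monoid hom -/
def Emon : Multiplicative (ℝ × ℝ) →* (PQ → ℝ) where
  toFun γ := fun p => p.1.1 ^ (Multiplicative.toAdd γ).1 * p.1.2 ^ (Multiplicative.toAdd γ).2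
  map_one' := by
    funext p
    simp [Real.rpow_zero]
  map_mul' γ δ := by
    funext p
    have h1 : (0:ℝ) < p.1.1 := p.2.1
    have h2 : (0:ℝ) < p.1.2 := p.2.2
    simp only [Pi.mul_apply, toAdd_mul, Prod.fst_add, Prod.snd_add]
    rw [Real.rpow_add h1, Real.rpow_add h2]
    ring

def Phi : AddMonoidAlgebra ℝ (ℝ × ℝ) →ₐ[ℝ] (PQ → ℝ) :=
  AddMonoidAlgebra.lift ℝ (PQ → ℝ) (ℝ × ℝ) Emon

example : True := trivial

lemma phi_single_apply (γ : ℝ × ℝ) (c : ℝ) (p : PQ) :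
    Phi (AddMonoidAlgebra.single γ c) p = c * p.1.1 ^ γ.1 * p.1.2 ^ γ.2 := by
  rw [Phi, AddMonoidAlgebra.lift_single]
  show c * (Emon (Multiplicative.ofAdd γ) p) = _
  rw [Emon]
  show c * (p.1.1 ^ γ.1 * p.1.2 ^ γ.2) = _
  ring

lemma isGenPoly_iff_mem_range (a : PQ → ℝ) :
    IsGenPoly a ↔ a ∈ Set.range Phi := by
  constructor
  · rintro ⟨m, c, α, hc, hα, ha⟩
    refine ⟨∑ i, AddMonoidAlgebra.single (α i) (c i), ?_⟩
    funext p
    rw [map_sum, ha p]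
    simp only [Finset.sum_apply]
    exact Finset.sum_congr rfl fun i _ => phi_single_apply _ _ _
  · rintro ⟨F, rfl⟩
    classical
    set s := F.coeff.support with hs
    refine ⟨s.card, fun i => F.coeff (s.equivFin.symm i), fun i => (s.equivFin.symm i : ℝ × ℝ), ?_, ?_, ?_⟩
    · intro i
      exact Finsupp.mem_support_iff.mp (s.equivFin.symm i).2
    · intro i j hij
      exact s.equivFin.symm.injective (Subtype.ext hij)
    · intro p
      have hF : F = ∑ γ ∈ s, AddMonoidAlgebra.single γ (F.coeff γ) := by
        conv_lhs => rw [← AddMonoidAlgebra.sum_coeff_single F]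
        rw [Finsupp.sum]
      conv_lhs => rw [hF]
      rw [map_sum]
      simp only [Finset.sum_apply]
      rw [← s.sum_coe_sort]
      rw [← s.equivFin.symm.sum_comp (fun x => Phi (AddMonoidAlgebra.single (x:ℝ×ℝ) (F.coeff x)) p)]
      exact Finset.sum_congr rfl fun i _ => phi_single_apply _ _ _

lemma IsGenPoly.add {a b : PQ → ℝ} (ha : IsGenPoly a) (hb : IsGenPoly b) : IsGenPoly (a + b) := by
  rw [isGenPoly_iff_mem_range] at *
  obtain ⟨F, rfl⟩ := ha; obtain ⟨G, rfl⟩ := hb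
  exact ⟨F + G, by rw [map_add]⟩

lemma IsGenPoly.mul {a b : PQ → ℝ} (ha : IsGenPoly a) (hb : IsGenPoly b) : IsGenPoly (a * b) := by
  rw [isGenPoly_iff_mem_range] at *
  obtain ⟨F, rfl⟩ := ha; obtain ⟨G, rfl⟩ := hb
  exact ⟨F * G, by rw [map_mul]⟩

lemma IsGenPoly.neg {a : PQ → ℝ} (ha : IsGenPoly a) : IsGenPoly (-a) := by
  rw [isGenPoly_iff_mem_range] at *
  obtain ⟨F, rfl⟩ := ha
  exact ⟨-F, by rw [map_neg]⟩

lemma IsGenPoly.zero : IsGenPoly (0 : PQ → ℝ) := by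
  rw [isGenPoly_iff_mem_range]; exact ⟨0, map_zero _⟩

lemma IsGenPoly.one : IsGenPoly (1 : PQ → ℝ) := by
  rw [isGenPoly_iff_mem_range]; exact ⟨1, map_one _⟩

lemma IsGenPoly.const (r : ℝ) : IsGenPoly (fun _ => r : PQ → ℝ) := by
  rw [isGenPoly_iff_mem_range]
  exact ⟨algebraMap ℝ _ r, by rw [AlgHom.commutes]; rfl⟩

lemma IsGenPoly.sum {ι : Type*} (s : Finset ι) (f : ι → PQ → ℝ) (hf : ∀ i ∈ s, IsGenPoly (f i)) :
    IsGenPoly (∑ i ∈ s, f i) := by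
  classical
  induction s using Finset.induction with
  | empty => simpa using IsGenPoly.zero
  | insert _ _ h ih =>
    rw [Finset.sum_insert h]
    exact (hf _ (Finset.mem_insert_self _ _)).add
      (ih fun i hi => hf i (Finset.mem_insert_of_mem hi))

lemma IsGenPoly.pow {a : PQ → ℝ} (ha : IsGenPoly a) (n : ℕ) : IsGenPoly (a ^ n) := by
  induction n with
  | zero => simpa using IsGenPoly.one
  | succ n ih => rw [pow_succ]; exact ih.mul ha

set_option linter.unusedSectionVars false

section FinLattice

variable {ι : Type*} [Fintype ι] [Nonempty ι]

lemma le_fsup (a : ι → ℝ) (i : ι) : a i ≤ ⨆ j, a j :=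
  le_ciSup (Set.finite_range a).bddAbove i

lemma finf_le (a : ι → ℝ) (i : ι) : (⨅ j, a j) ≤ a i :=
  ciInf_le (Set.finite_range a).bddBelow i

lemma fsup_exists (a : ι → ℝ) : ∃ i, (⨆ j, a j) = a i := by
  obtain ⟨i, hi⟩ := Finite.exists_max a
  exact ⟨i, le_antisymm (ciSup_le hi) (le_fsup a i)⟩

lemma finf_exists (a : ι → ℝ) : ∃ i, (⨅ j, a j) = a i := by
  obtain ⟨i, hi⟩ := Finite.exists_min a
  exact ⟨i, le_antisymm (finf_le a i) (le_ciInf hi)⟩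

lemma fsup_equiv {β : Type*} (e : ι ≃ β) (f : β → ℝ) : ⨆ a, f (e a) = ⨆ b, f b :=
  congrArg sSup (e.surjective.range_comp f)

lemma finf_equiv {β : Type*} (e : ι ≃ β) (f : β → ℝ) : ⨅ a, f (e a) = ⨅ b, f b :=
  congrArg sInf (e.surjective.range_comp f)

variable {ι' : Type*} [Fintype ι'] [Nonempty ι']

lemma fsup_add (a : ι → ℝ) (b : ι' → ℝ) :
    (⨆ i, a i) + (⨆ j, b j) = ⨆ q : ι × ι', (a q.1 + b q.2) := by
  obtain ⟨i0, hi0⟩ := fsup_exists a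
  obtain ⟨j0, hj0⟩ := fsup_exists b
  refine le_antisymm ?_ ?_
  · rw [hi0, hj0]; exact le_fsup (fun q : ι × ι' => a q.1 + b q.2) (i0, j0)
  · exact ciSup_le fun q => add_le_add (le_fsup a q.1) (le_fsup b q.2)

lemma finf_add (a : ι → ℝ) (b : ι' → ℝ) :
    (⨅ i, a i) + (⨅ j, b j) = ⨅ q : ι × ι', (a q.1 + b q.2) := by
  obtain ⟨i0, hi0⟩ := finf_exists a
  obtain ⟨j0, hj0⟩ := finf_exists b
  refine le_antisymm ?_ ?_
  · exact le_ciInf fun q => add_le_add (finf_le a q.1) (finf_le b q.2)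
  · rw [hi0, hj0]; exact finf_le (fun q : ι × ι' => a q.1 + b q.2) (i0, j0)

lemma fsup_mul (a : ι → ℝ) (b : ι' → ℝ) (ha : ∀ i, 0 ≤ a i) (hb : ∀ j, 0 ≤ b j) :
    (⨆ i, a i) * (⨆ j, b j) = ⨆ q : ι × ι', (a q.1 * b q.2) := by
  obtain ⟨i0, hi0⟩ := fsup_exists a
  obtain ⟨j0, hj0⟩ := fsup_exists b
  refine le_antisymm ?_ ?_
  · rw [hi0, hj0]; exact le_fsup (fun q : ι × ι' => a q.1 * b q.2) (i0, j0)
  · refine ciSup_le fun q => ?_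
    have h1 : a q.1 ≤ ⨆ i, a i := le_fsup a q.1
    have h2 : b q.2 ≤ ⨆ j, b j := le_fsup b q.2
    have h3 : (0:ℝ) ≤ ⨆ i, a i := le_trans (ha q.1) h1
    exact mul_le_mul h1 h2 (hb q.2) h3

lemma finf_mul (a : ι → ℝ) (b : ι' → ℝ) (ha : ∀ i, 0 ≤ a i) (hb : ∀ j, 0 ≤ b j) :
    (⨅ i, a i) * (⨅ j, b j) = ⨅ q : ι × ι', (a q.1 * b q.2) := by
  obtain ⟨i0, hi0⟩ := finf_exists a
  obtain ⟨j0, hj0⟩ := finf_exists b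
  refine le_antisymm ?_ ?_
  · refine le_ciInf fun q => ?_
    have h1 : (⨅ i, a i) ≤ a q.1 := finf_le a q.1
    have h2 : (⨅ j, b j) ≤ b q.2 := finf_le b q.2
    have h3 : (0:ℝ) ≤ ⨅ i, a i := le_ciInf ha
    have h4 : (0:ℝ) ≤ ⨅ j, b j := le_ciInf hb
    exact mul_le_mul h1 h2 h4 (le_trans h3 h1)
  · rw [hi0, hj0]; exact finf_le (fun q : ι × ι' => a q.1 * b q.2) (i0, j0)

lemma neg_fsup (a : ι → ℝ) : -(⨆ i, a i) = ⨅ i, -a i := by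
  obtain ⟨i0, hi0⟩ := fsup_exists a
  refine le_antisymm (le_ciInf fun i => neg_le_neg (le_fsup a i)) ?_
  rw [hi0]
  exact finf_le (fun i => -a i) i0

lemma finf_fsup_comm {κ : ι → Type*} [∀ i, Fintype (κ i)] [∀ i, Nonempty (κ i)]
    (g : ∀ i, κ i → ℝ) :
    (⨅ i, ⨆ k, g i k) = ⨆ φ : ∀ i, κ i, ⨅ i, g i (φ i) := by
  classical
  refine le_antisymm ?_ ?_
  · choose φ hφ using fun i => fsup_exists (g i)
    have : (⨅ i, ⨆ k, g i k) = ⨅ i, g i (φ i) := by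
      exact iInf_congr hφ
    rw [this]
    exact le_fsup (fun φ : ∀ i, κ i => ⨅ i, g i (φ i)) φ
  · refine ciSup_le fun φ => le_ciInf fun i => ?_
    exact le_trans (finf_le (fun j => g j (φ j)) i) (le_fsup (g i) (φ i))

end FinLattice

def SupInfP (P : (PQ → ℝ) → Prop) (h : PQ → ℝ) : Prop :=
  ∃ (J : ℕ) (K : Fin (J + 1) → ℕ)
    (f : (j : Fin (J + 1)) → Fin (K j + 1) → PQ → ℝ),
    (∀ j k, P (f j k)) ∧ ∀ p : PQ, h p = ⨆ j, ⨅ k, f j k p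

lemma SupInfP.of_index {P : (PQ → ℝ) → Prop} {ι : Type} {κ : ι → Type}
    [Fintype ι] [Nonempty ι] [∀ i, Fintype (κ i)] [∀ i, Nonempty (κ i)]
    (f : ∀ i, κ i → PQ → ℝ) (hf : ∀ i k, P (f i k)) (h : PQ → ℝ)
    (hh : ∀ p, h p = ⨆ i, ⨅ k, f i k p) : SupInfP P h := by
  have hJ : Fintype.card ι - 1 + 1 = Fintype.card ι :=
    Nat.succ_pred_eq_of_pos Fintype.card_pos
  let eJ : Fin (Fintype.card ι - 1 + 1) ≃ ι := (finCongr hJ).trans (Fintype.equivFin ι).symm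
  have hK : ∀ j, Fintype.card (κ (eJ j)) - 1 + 1 = Fintype.card (κ (eJ j)) :=
    fun j => Nat.succ_pred_eq_of_pos Fintype.card_pos
  let eK : ∀ j, Fin (Fintype.card (κ (eJ j)) - 1 + 1) ≃ κ (eJ j) :=
    fun j => (finCongr (hK j)).trans (Fintype.equivFin (κ (eJ j))).symm
  refine ⟨Fintype.card ι - 1, fun j => Fintype.card (κ (eJ j)) - 1,
    fun j k => f (eJ j) (eK j k), fun j k => hf _ _, fun p => ?_⟩
  rw [hh p, ← fsup_equiv eJ (fun i => ⨅ k, f i k p)]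
  exact iSup_congr fun j => (finf_equiv (eK j) (fun k => f (eJ j) k p)).symm

lemma SupInfP.mono {P Q : (PQ → ℝ) → Prop} (hPQ : ∀ f, P f → Q f) {h : PQ → ℝ}
    (hh : SupInfP P h) : SupInfP Q h := by
  obtain ⟨J, K, f, hf, hrep⟩ := hh
  exact ⟨J, K, f, fun j k => hPQ _ (hf j k), hrep⟩

lemma SupInfP.add {P Q R : (PQ → ℝ) → Prop} (hPQR : ∀ f g, P f → Q g → R (f + g))
    {h₁ h₂ : PQ → ℝ} (h1 : SupInfP P h₁) (h2 : SupInfP Q h₂) : SupInfP R (h₁ + h₂) := by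
  obtain ⟨J₁, K₁, f₁, hf₁, hr₁⟩ := h1
  obtain ⟨J₂, K₂, f₂, hf₂, hr₂⟩ := h2
  refine SupInfP.of_index (ι := Fin (J₁+1) × Fin (J₂+1))
    (κ := fun q => Fin (K₁ q.1 + 1) × Fin (K₂ q.2 + 1))
    (fun q r => f₁ q.1 r.1 + f₂ q.2 r.2)
    (fun q r => hPQR _ _ (hf₁ _ _) (hf₂ _ _)) _ (fun p => ?_)
  show h₁ p + h₂ p = _
  rw [hr₁ p, hr₂ p, fsup_add]
  exact iSup_congr fun q => finf_add (fun k => f₁ q.1 k p) (fun k => f₂ q.2 k p)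

lemma SupInfP.mul {P Q R : (PQ → ℝ) → Prop}
    (hP0 : ∀ f, P f → ∀ p, 0 ≤ f p) (hQ0 : ∀ g, Q g → ∀ p, 0 ≤ g p)
    (hPQR : ∀ f g, P f → Q g → R (f * g))
    {h₁ h₂ : PQ → ℝ} (h1 : SupInfP P h₁) (h2 : SupInfP Q h₂) : SupInfP R (h₁ * h₂) := by
  obtain ⟨J₁, K₁, f₁, hf₁, hr₁⟩ := h1
  obtain ⟨J₂, K₂, f₂, hf₂, hr₂⟩ := h2
  refine SupInfP.of_index (ι := Fin (J₁+1) × Fin (J₂+1))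
    (κ := fun q => Fin (K₁ q.1 + 1) × Fin (K₂ q.2 + 1))
    (fun q r => f₁ q.1 r.1 * f₂ q.2 r.2)
    (fun q r => hPQR _ _ (hf₁ _ _) (hf₂ _ _)) _ (fun p => ?_)
  show h₁ p * h₂ p = _
  rw [hr₁ p, hr₂ p]
  rw [fsup_mul _ _ (fun j => le_ciInf fun k => hP0 _ (hf₁ j k) p)
    (fun j => le_ciInf fun k => hQ0 _ (hf₂ j k) p)]
  exact iSup_congr fun q => finf_mul (fun k => f₁ q.1 k p) (fun k => f₂ q.2 k p)
    (fun k => hP0 _ (hf₁ q.1 k) p) (fun k => hQ0 _ (hf₂ q.2 k) p)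

lemma SupInfP.neg {P Q : (PQ → ℝ) → Prop} (hPQ : ∀ f, P f → Q (-f))
    {h : PQ → ℝ} (hh : SupInfP P h) : SupInfP Q (-h) := by
  obtain ⟨J, K, f, hf, hr⟩ := hh
  refine SupInfP.of_index (ι := ∀ j : Fin (J+1), Fin (K j + 1))
    (κ := fun _ => Fin (J+1))
    (fun φ j => -(f j (φ j)))
    (fun φ j => hPQ _ (hf _ _)) _ (fun p => ?_)
  show -(h p) = _
  rw [hr p, neg_fsup]
  have : ∀ j, -(⨅ k, f j k p) = ⨆ k, -(f j k p) := by
    intro j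
    rw [← neg_neg (⨆ k, -(f j k p)), neg_fsup]
    simp only [neg_neg]
  rw [iInf_congr this, finf_fsup_comm]
  rfl

lemma rpow_le_base_pow {x : ℝ} (hx : 0 < x) {a : ℝ} {N : ℕ} (ha : |a| ≤ N) :
    x ^ a ≤ (x + x⁻¹) ^ (N : ℕ) := by
  have hb2 : (2:ℝ) ≤ x + x⁻¹ := by
    have h : x * (x + x⁻¹) = x ^ 2 + 1 := by field_simp
    nlinarith [sq_nonneg (x - 1)]
  have hb1 : (1:ℝ) ≤ x + x⁻¹ := by linarith
  have hxb : x ≤ x + x⁻¹ := le_add_of_nonneg_right (inv_pos.mpr hx).le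
  have hinvb : x⁻¹ ≤ x + x⁻¹ := le_add_of_nonneg_left hx.le
  rw [← Real.rpow_natCast (x + x⁻¹) N]
  rcases le_or_gt 0 a with h0 | h0
  · calc x ^ a ≤ (x + x⁻¹) ^ a := Real.rpow_le_rpow hx.le hxb h0
    _ ≤ (x + x⁻¹) ^ (N : ℝ) := by
        refine Real.rpow_le_rpow_of_exponent_le hb1 ?_
        calc a ≤ |a| := le_abs_self a
        _ ≤ N := ha
  · have hxa : x ^ a = x⁻¹ ^ (-a) := by
      rw [Real.inv_rpow hx.le, Real.rpow_neg hx.le, inv_inv]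
    rw [hxa]
    calc x⁻¹ ^ (-a) ≤ (x + x⁻¹) ^ (-a) :=
          Real.rpow_le_rpow (inv_nonneg.mpr hx.le) hinvb (by linarith)
    _ ≤ (x + x⁻¹) ^ (N : ℝ) := by
        refine Real.rpow_le_rpow_of_exponent_le hb1 ?_
        calc -a ≤ |a| := neg_le_abs a
        _ ≤ N := ha

lemma genPoly_xinv : IsGenPoly (fun p : PQ => p.1.1 + (p.1.1)⁻¹) := by
  rw [isGenPoly_iff_mem_range]
  refine ⟨AddMonoidAlgebra.single ((1:ℝ), (0:ℝ)) 1 + AddMonoidAlgebra.single ((-1:ℝ), (0:ℝ)) 1, ?_⟩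
  funext p
  have := p.2.1
  rw [map_add]
  show Phi _ p + Phi _ p = _
  rw [phi_single_apply, phi_single_apply]
  simp [Real.rpow_one, Real.rpow_zero, Real.rpow_neg_one]

lemma genPoly_yinv : IsGenPoly (fun p : PQ => p.1.2 + (p.1.2)⁻¹) := by
  rw [isGenPoly_iff_mem_range]
  refine ⟨AddMonoidAlgebra.single ((0:ℝ), (1:ℝ)) 1 + AddMonoidAlgebra.single ((0:ℝ), (-1:ℝ)) 1, ?_⟩
  funext p
  have := p.2.2
  rw [map_add]
  show Phi _ p + Phi _ p = _
  rw [phi_single_apply, phi_single_apply]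
  simp [Real.rpow_one, Real.rpow_zero, Real.rpow_neg_one]

lemma exists_dominating {f : PQ → ℝ} (hf : IsGenPoly f) :
    ∃ Q : PQ → ℝ, IsGenPoly Q ∧ (∀ p, 0 ≤ Q p) ∧ ∀ p, |f p| ≤ Q p := by
  obtain ⟨m, c, α, hc, hα, hrep⟩ := hf
  set N : ℕ := ∑ i, (⌈|(α i).1|⌉₊ + ⌈|(α i).2|⌉₊) with hN
  set C : ℝ := ∑ i, |c i| with hC
  refine ⟨fun p => C * ((p.1.1 + (p.1.1)⁻¹) ^ N * (p.1.2 + (p.1.2)⁻¹) ^ N), ?_, ?_, ?_⟩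
  · have : (fun p : PQ => C * ((p.1.1 + (p.1.1)⁻¹) ^ N * (p.1.2 + (p.1.2)⁻¹) ^ N)) =
        (fun _ : PQ => C) * ((fun p : PQ => p.1.1 + (p.1.1)⁻¹) ^ N *
          (fun p : PQ => p.1.2 + (p.1.2)⁻¹) ^ N) := rfl
    rw [this]
    exact (IsGenPoly.const C).mul ((genPoly_xinv.pow N).mul (genPoly_yinv.pow N))
  · intro p
    have h1 : (0:ℝ) < p.1.1 := p.2.1
    have h2 : (0:ℝ) < p.1.2 := p.2.2
    have hC0 : 0 ≤ C := Finset.sum_nonneg fun i _ => abs_nonneg _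
    positivity
  · intro p
    have h1 : (0:ℝ) < p.1.1 := p.2.1
    have h2 : (0:ℝ) < p.1.2 := p.2.2
    have hNa : ∀ i : Fin m, |(α i).1| ≤ N := by
      intro i
      calc |(α i).1| ≤ (⌈|(α i).1|⌉₊ : ℝ) := Nat.le_ceil _
      _ ≤ ((⌈|(α i).1|⌉₊ + ⌈|(α i).2|⌉₊ : ℕ) : ℝ) := by
          push_cast; linarith [Nat.cast_nonneg (α := ℝ) ⌈|(α i).2|⌉₊]
      _ ≤ (N : ℝ) := by
          exact_mod_cast Nat.cast_le.mpr (Finset.single_le_sum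
            (f := fun i => ⌈|(α i).1|⌉₊ + ⌈|(α i).2|⌉₊) (fun _ _ => Nat.zero_le _)
            (Finset.mem_univ i))
    have hNb : ∀ i : Fin m, |(α i).2| ≤ N := by
      intro i
      calc |(α i).2| ≤ (⌈|(α i).2|⌉₊ : ℝ) := Nat.le_ceil _
      _ ≤ ((⌈|(α i).1|⌉₊ + ⌈|(α i).2|⌉₊ : ℕ) : ℝ) := by
          push_cast; linarith [Nat.cast_nonneg (α := ℝ) ⌈|(α i).1|⌉₊]
      _ ≤ (N : ℝ) := by
          exact_mod_cast Nat.cast_le.mpr (Finset.single_le_sum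
            (f := fun i => ⌈|(α i).1|⌉₊ + ⌈|(α i).2|⌉₊) (fun _ _ => Nat.zero_le _)
            (Finset.mem_univ i))
    set B : ℝ := (p.1.1 + (p.1.1)⁻¹) ^ N * (p.1.2 + (p.1.2)⁻¹) ^ N with hB
    have hB0 : 0 ≤ B := by positivity
    have hterm : ∀ i : Fin m, |c i * p.1.1 ^ (α i).1 * p.1.2 ^ (α i).2| ≤ |c i| * B := by
      intro i
      rw [abs_mul, abs_mul, abs_of_nonneg (Real.rpow_nonneg h1.le _),
        abs_of_nonneg (Real.rpow_nonneg h2.le _), mul_assoc]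
      refine mul_le_mul_of_nonneg_left ?_ (abs_nonneg _)
      rw [hB]
      exact mul_le_mul (rpow_le_base_pow h1 (hNa i)) (rpow_le_base_pow h2 (hNb i))
        (Real.rpow_nonneg h2.le _) (by positivity)
    calc |f p| = |∑ i, c i * p.1.1 ^ (α i).1 * p.1.2 ^ (α i).2| := by rw [hrep p]
    _ ≤ ∑ i, |c i * p.1.1 ^ (α i).1 * p.1.2 ^ (α i).2| := Finset.abs_sum_le_sum_abs _ _
    _ ≤ ∑ i, |c i| * B := Finset.sum_le_sum fun i _ => hterm i
    _ = C * B := by rw [← Finset.sum_mul]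

def NNGP (f : PQ → ℝ) : Prop := IsGenPoly f ∧ ∀ p, 0 ≤ f p

lemma supInfP_single {P : (PQ → ℝ) → Prop} {Q : PQ → ℝ} (hQ : P Q) : SupInfP P Q :=
  ⟨0, fun _ => 0, fun _ _ => Q, fun _ _ => hQ, fun p => by
    show Q p = ⨆ _ : Fin 1, ⨅ _ : Fin 1, Q p
    rw [ciInf_const, ciSup_const]⟩

lemma isSupInf_iff {h : PQ → ℝ} : IsSupInf h ↔ SupInfP IsGenPoly h := Iff.rfl

lemma exists_shift {h : PQ → ℝ} (hh : IsSupInf h) :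
    ∃ Q : PQ → ℝ, IsGenPoly Q ∧ (∀ p, 0 ≤ Q p) ∧ SupInfP NNGP (h + Q) := by
  obtain ⟨J, K, f, hf, hrep⟩ := hh
  have hdom := fun j k => exists_dominating (hf j k)
  choose g hg1 hg2 hg3 using hdom
  set Q : PQ → ℝ := ∑ j, ∑ k, g j k with hQdef
  have hQgp : IsGenPoly Q :=
    IsGenPoly.sum _ _ fun j _ => IsGenPoly.sum _ _ fun k _ => hg1 j k
  have hQval : ∀ p, Q p = ∑ j, ∑ k, g j k p := by
    intro p; rw [hQdef]; simp [Finset.sum_apply]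
  have hQ0 : ∀ p, 0 ≤ Q p := by
    intro p; rw [hQval]
    exact Finset.sum_nonneg fun j _ => Finset.sum_nonneg fun k _ => hg2 j k p
  have hgle : ∀ j k p, g j k p ≤ Q p := by
    intro j k p
    rw [hQval]
    calc g j k p ≤ ∑ k', g j k' p :=
      Finset.single_le_sum (fun k' _ => hg2 j k' p) (Finset.mem_univ k)
    _ ≤ ∑ j', ∑ k', g j' k' p :=
      Finset.single_le_sum (f := fun j' => ∑ k', g j' k' p)
        (fun j' _ => Finset.sum_nonneg fun k' _ => hg2 j' k' p) (Finset.mem_univ j)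
  refine ⟨Q, hQgp, hQ0, ?_⟩
  have hP1 : SupInfP (fun u => IsGenPoly u ∧ ∀ p, -(Q p) ≤ u p) h := by
    refine ⟨J, K, f, fun j k => ⟨hf j k, fun p => ?_⟩, hrep⟩
    have := hg3 j k p
    have := hgle j k p
    have := neg_abs_le (f j k p)
    linarith
  have hP2 : SupInfP (fun u => u = Q) Q := supInfP_single rfl
  exact SupInfP.add (fun u v ⟨hu, hu2⟩ hv => by
    subst hv
    exact ⟨hu.add hQgp, fun p => by have := hu2 p; show 0 ≤ u p + Q p; linarith⟩) hP1 hP2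

lemma IsSupInf.add {h₁ h₂ : PQ → ℝ} (h1 : IsSupInf h₁) (h2 : IsSupInf h₂) :
    IsSupInf (h₁ + h₂) :=
  SupInfP.add (fun _ _ hf hg => hf.add hg) h1 h2

lemma IsSupInf.neg {h : PQ → ℝ} (hh : IsSupInf h) : IsSupInf (-h) :=
  SupInfP.neg (fun _ hf => hf.neg) hh

lemma IsSupInf.sub {h₁ h₂ : PQ → ℝ} (h1 : IsSupInf h₁) (h2 : IsSupInf h₂) :
    IsSupInf (h₁ - h₂) := by
  rw [sub_eq_add_neg]
  exact h1.add h2.neg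

lemma SupInfP.nnmul {h₁ h₂ : PQ → ℝ} (h1 : SupInfP NNGP h₁) (h2 : SupInfP NNGP h₂) :
    SupInfP NNGP (h₁ * h₂) :=
  SupInfP.mul (fun _ hf => hf.2) (fun _ hg => hg.2)
    (fun f g hf hg => ⟨hf.1.mul hg.1, fun p => mul_nonneg (hf.2 p) (hg.2 p)⟩) h1 h2

lemma IsSupInf.mul {h₁ h₂ : PQ → ℝ} (h1 : IsSupInf h₁) (h2 : IsSupInf h₂) :
    IsSupInf (h₁ * h₂) := by
  obtain ⟨Q₁, hQ₁gp, hQ₁0, hu₁⟩ := exists_shift h1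
  obtain ⟨Q₂, hQ₂gp, hQ₂0, hu₂⟩ := exists_shift h2
  have hQ₁nn : SupInfP NNGP Q₁ := supInfP_single ⟨hQ₁gp, hQ₁0⟩
  have hQ₂nn : SupInfP NNGP Q₂ := supInfP_single ⟨hQ₂gp, hQ₂0⟩
  have key : h₁ * h₂ = (h₁ + Q₁) * (h₂ + Q₂) - Q₁ * (h₂ + Q₂) - (h₁ + Q₁) * Q₂ + Q₁ * Q₂ := by
    ring
  rw [key]
  have m1 : IsSupInf ((h₁ + Q₁) * (h₂ + Q₂)) :=
    (hu₁.nnmul hu₂).mono (fun _ hf => hf.1)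
  have m2 : IsSupInf (Q₁ * (h₂ + Q₂)) := (hQ₁nn.nnmul hu₂).mono (fun _ hf => hf.1)
  have m3 : IsSupInf ((h₁ + Q₁) * Q₂) := (hu₁.nnmul hQ₂nn).mono (fun _ hf => hf.1)
  have m4 : IsSupInf (Q₁ * Q₂) := (hQ₁nn.nnmul hQ₂nn).mono (fun _ hf => hf.1)
  exact ((m1.sub m2).sub m3).add m4


/-- The set of sups of infs of finitely many generalized polynomial functions is
closed under subtraction and multiplication, and forms a subring of the ring of
all real-valued functions on `(0,∞)²`. -/
theorem supInf_closed_under_sub_mul :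
    (∀ h₁ h₂ : PQ → ℝ, IsSupInf h₁ → IsSupInf h₂ →
      IsSupInf (h₁ - h₂) ∧ IsSupInf (h₁ * h₂)) ∧
    ∃ S : Subring (PQ → ℝ), (S : Set (PQ → ℝ)) = {h : PQ → ℝ | IsSupInf h} := by
  refine ⟨fun h₁ h₂ h1 h2 => ⟨h1.sub h2, h1.mul h2⟩, ?_⟩
  refine ⟨{ carrier := {h | IsSupInf h},
            mul_mem' := fun hf hg => hf.mul hg,
            one_mem' := supInfP_single IsGenPoly.one,
            add_mem' := fun hf hg => hf.add hg,
            zero_mem' := supInfP_single IsGenPoly.zero,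
            neg_mem' := fun hf => hf.neg }, rfl⟩
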